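/- Fix M > 0, b > 0, and ε ≥ 0. Let μ and ν be Borel probability measures on [0,M], write opt(μ) = inf_{x ∈ [0,M]} S(x,μ), and let x_ν, x_μ ∈ [0,M] satisfy S(x_ν,ν) = opt(ν) and S(x_μ,μ) = opt(μ). Then: (i) S(x_ν,μ) − opt(μ) ≤ 2b + 2·d_W(μ,ν); (ii) if moreover d_W(μ,ν) ≤ ε and p = min(x_ν + √(b·ε), M), then S(p,μ) − opt(μ) ≤ 4·√(b·ε) + 2ε. -/

import Mathlib

open MeasureTheory

noncomputable section

/-- Cumulative distribution function `F(t) = μ([0,t])`. -/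
def cdf0 (μ : Measure ℝ) (t : ℝ) : ℝ := (μ (Set.Icc 0 t)).toReal

/-- Wasserstein-1 distance between measures on `[0,M]`: `∫₀^M |F(t) - H(t)| dt`. -/
def wassDist (M : ℝ) (μ ν : Measure ℝ) : ℝ :=
  ∫ t in Set.Icc (0:ℝ) M, |cdf0 μ t - cdf0 ν t|

/-- Expected ski-rental cost with buying cost `b`. -/
def skiCost (b x : ℝ) (μ : Measure ℝ) : ℝ :=
  ∫ ξ, (if ξ ≤ x then ξ else b + x) ∂μ

/-- Optimal ski-rental cost `opt(μ) = inf_{x ∈ [0,M]} S(x,μ)`. -/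
def optSki (b M : ℝ) (μ : Measure ℝ) : ℝ := ⨅ x : Set.Icc (0:ℝ) M, skiCost b x.1 μ

section Auxiliary

open Set Filter

variable {M b ε : ℝ} {μ ν : Measure ℝ}

lemma cdf0_nonneg (μ : Measure ℝ) (t : ℝ) : 0 ≤ cdf0 μ t := ENNReal.toReal_nonneg

lemma cdf0_mono [IsFiniteMeasure μ] : Monotone (cdf0 μ) := fun _ _ h =>
  ENNReal.toReal_mono (measure_ne_top _ _) (measure_mono (Set.Icc_subset_Icc_right h))

lemma cdf0_le_one [IsProbabilityMeasure μ] (t : ℝ) : cdf0 μ t ≤ 1 := by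
  have h : μ (Set.Icc 0 t) ≤ 1 := by
    have := measure_mono (μ := μ) (Set.subset_univ (Set.Icc 0 t))
    simpa using this
  simpa [cdf0] using ENNReal.toReal_mono (by simp) h

lemma cdf0_measurable [IsFiniteMeasure μ] : Measurable (cdf0 μ) := cdf0_mono.measurable

lemma compl_null [IsProbabilityMeasure μ] (hμ : μ (Set.Icc 0 M) = 1) : μ (Set.Icc 0 M)ᶜ = 0 := by
  rw [measure_compl measurableSet_Icc (measure_ne_top _ _), hμ]
  simp

lemma ae_mem_Icc [IsProbabilityMeasure μ] (hμ : μ (Set.Icc 0 M) = 1) :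
    ∀ᵐ ξ ∂μ, ξ ∈ Set.Icc (0:ℝ) M := by
  rw [ae_iff]
  exact compl_null hμ

lemma meas_Iic_eq [IsProbabilityMeasure μ] (hμ : μ (Set.Icc 0 M) = 1) {x : ℝ} (hx : 0 ≤ x) :
    μ (Set.Iic x) = μ (Set.Icc 0 x) := by
  have h0 : μ (Set.Iio 0) = 0 :=
    measure_mono_null (fun t ht => by
      simp only [Set.mem_compl_iff, Set.mem_Icc]; intro h; exact absurd h.1 (not_le.2 ht))
      (compl_null hμ)
  have : Set.Iic x = Set.Icc 0 x ∪ Set.Iio 0 := by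
    ext t; simp only [Set.mem_Iic, Set.mem_union, Set.mem_Icc, Set.mem_Iio]
    constructor
    · intro h; rcases le_or_gt 0 t with h'|h'
      · exact Or.inl ⟨h', h⟩
      · exact Or.inr h'
    · rintro (⟨_, h⟩|h) ; exact h; linarith
  rw [this]
  refine le_antisymm ?_ (measure_mono Set.subset_union_left)
  calc μ (Set.Icc 0 x ∪ Set.Iio 0) ≤ μ (Set.Icc 0 x) + μ (Set.Iio 0) := measure_union_le _ _
  _ = μ (Set.Icc 0 x) := by rw [h0, add_zero]

lemma cdf0_M [IsProbabilityMeasure μ] (hμ : μ (Set.Icc 0 M) = 1) : cdf0 μ M = 1 := by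
  simp [cdf0, hμ]

lemma cdf0_integrableOn [IsProbabilityMeasure μ] (s : Set ℝ) (hs : volume s ≠ ⊤) :
    IntegrableOn (cdf0 μ) s := by
  refine Integrable.mono' (g := fun _ => (1:ℝ))
    (integrableOn_const hs)
    (cdf0_measurable.aestronglyMeasurable) ?_
  filter_upwards with t
  rw [Real.norm_eq_abs, abs_of_nonneg (cdf0_nonneg μ t)]
  exact cdf0_le_one t

lemma skiCost_eq [IsProbabilityMeasure μ] (hμ : μ (Set.Icc 0 M) = 1)
    {x : ℝ} (hx : x ∈ Set.Icc 0 M) :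
    skiCost b x μ = b + x - b * cdf0 μ x - ∫ t in Set.Icc 0 x, cdf0 μ t := by
  obtain ⟨hx0, hxM⟩ := hx
  set g1 : ℝ → ℝ := (Set.Iic x).indicator (fun _ => b) with hg1
  set g2 : ℝ → ℝ := (Set.Iic x).indicator (fun ξ => x - ξ) with hg2
  have m1 : Measurable g1 := measurable_const.indicator measurableSet_Iic
  have m2 : Measurable g2 := (measurable_const.sub measurable_id).indicator measurableSet_Iic
  have i1 : Integrable g1 μ := by
    refine Integrable.mono' (g := fun _ => |b|) (integrable_const _) m1.aestronglyMeasurable ?_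
    filter_upwards with ξ
    by_cases h : ξ ≤ x
    · simp [hg1, Set.indicator_of_mem, Set.mem_Iic, h]
    · simp [hg1, Set.indicator_of_notMem, Set.mem_Iic, h, abs_nonneg]
  have i2 : Integrable g2 μ := by
    refine Integrable.mono' (g := fun _ => x) (integrable_const _) m2.aestronglyMeasurable ?_
    filter_upwards [ae_mem_Icc hμ] with ξ hξ
    by_cases h : ξ ≤ x
    · rw [hg2]; rw [Set.indicator_of_mem (by exact h)]
      rw [Real.norm_eq_abs, abs_of_nonneg (by linarith)]
      linarith [hξ.1]
    · rw [hg2]; rw [Set.indicator_of_notMem (by exact h)]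
      simpa using hx0
  have hpt : (fun ξ => if ξ ≤ x then ξ else b + x) = fun ξ => (b + x) - g1 ξ - g2 ξ := by
    funext ξ
    by_cases h : ξ ≤ x
    · simp only [if_pos h, hg1, hg2, Set.indicator_of_mem (Set.mem_Iic.2 h)]; ring
    · simp only [if_neg h, hg1, hg2,
        Set.indicator_of_notMem (by simpa using h : ξ ∉ Set.Iic x)]; ring
  have hI1 : ∫ ξ, g1 ξ ∂μ = b * cdf0 μ x := by
    rw [hg1, integral_indicator_const _ measurableSet_Iic, measureReal_def, meas_Iic_eq hμ hx0]
    simp [cdf0, mul_comm]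
  have hI2 : ∫ ξ, g2 ξ ∂μ = ∫ t in Set.Icc 0 x, cdf0 μ t := by
    have hnn : ∀ ξ, 0 ≤ g2 ξ := by
      intro ξ; by_cases h : ξ ≤ x
      · rw [hg2, Set.indicator_of_mem (Set.mem_Iic.2 h)]; linarith
      · rw [hg2, Set.indicator_of_notMem (by simpa using h : ξ ∉ Set.Iic x)]
    rw [integral_eq_lintegral_of_nonneg_ae (ae_of_all _ hnn) m2.aestronglyMeasurable]
    set ρ := volume.restrict (Set.Icc (0:ℝ) x) with hρ
    have key1 : ∀ᵐ ξ ∂μ, ENNReal.ofReal (g2 ξ) = ρ (Set.Ici ξ) := by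
      filter_upwards [ae_mem_Icc hμ] with ξ hξ
      rw [hρ, Measure.restrict_apply measurableSet_Ici]
      have hset : Set.Ici ξ ∩ Set.Icc 0 x = Set.Icc ξ x := by
        ext t
        simp only [Set.mem_inter_iff, Set.mem_Ici, Set.mem_Icc]
        constructor
        · rintro ⟨h1, _, h3⟩; exact ⟨h1, h3⟩
        · rintro ⟨h1, h2⟩; exact ⟨h1, le_trans hξ.1 h1, h2⟩
      rw [hset, Real.volume_Icc]
      by_cases h : ξ ≤ x
      · rw [hg2, Set.indicator_of_mem (Set.mem_Iic.2 h)]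
      · rw [hg2, Set.indicator_of_notMem (by simpa using h : ξ ∉ Set.Iic x)]
        rw [ENNReal.ofReal_zero, eq_comm, ENNReal.ofReal_eq_zero]
        linarith
    rw [lintegral_congr_ae key1]
    have hA : MeasurableSet {p : ℝ × ℝ | p.1 ≤ p.2} :=
      measurableSet_le measurable_fst measurable_snd
    have swap : ∫⁻ ξ, ρ (Set.Ici ξ) ∂μ = ∫⁻ t, μ (Set.Iic t) ∂ρ := by
      have h1 := Measure.prod_apply (μ := μ) (ν := ρ) hA
      have h2 := Measure.prod_apply_symm (μ := μ) (ν := ρ) hA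
      rw [h2] at h1
      have e1 : ∀ ξ : ℝ, Prod.mk ξ ⁻¹' {p : ℝ × ℝ | p.1 ≤ p.2} = Set.Ici ξ := fun ξ => rfl
      have e2 : ∀ t : ℝ, (fun ξ => (ξ, t)) ⁻¹' {p : ℝ × ℝ | p.1 ≤ p.2} = Set.Iic t := fun t => rfl
      simp only [e1, e2] at h1
      exact h1.symm
    rw [swap, hρ]
    have step : ∫⁻ t in Set.Icc (0:ℝ) x, μ (Set.Iic t) = ∫⁻ t in Set.Icc (0:ℝ) x, μ (Set.Icc 0 t) :=
      setLIntegral_congr_fun measurableSet_Icc (fun t ht => meas_Iic_eq hμ ht.1)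
    rw [step]
    have hm : AEMeasurable (fun t => μ (Set.Icc 0 t)) (volume.restrict (Set.Icc (0:ℝ) x)) :=
      (Monotone.measurable (fun a c h => measure_mono (Set.Icc_subset_Icc_right h))).aemeasurable
    rw [← integral_toReal hm (ae_of_all _ fun t => measure_lt_top μ _)]
    rfl
  have ic : Integrable (fun ξ => b + x - g1 ξ) μ := (integrable_const _).sub i1
  rw [skiCost, hpt, integral_sub ic i2,
      integral_sub (integrable_const (b + x)) i1, integral_const, hI1, hI2]
  simp

lemma wass_nonneg : 0 ≤ wassDist M μ ν := integral_nonneg fun t => abs_nonneg _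

lemma wass_symm : wassDist M μ ν = wassDist M ν μ := by
  unfold wassDist; simp_rw [abs_sub_comm]

lemma vol_ne_top {a c : ℝ} : volume (Set.Icc a c) ≠ ⊤ := by
  simp [Real.volume_Icc]

lemma vol_ne_top' {a c : ℝ} : volume (Set.Ioc a c) ≠ ⊤ := by
  simp [Real.volume_Ioc]

lemma setint_sub_le_wass [IsProbabilityMeasure μ] [IsProbabilityMeasure ν]
    {s : Set ℝ} (hsub : s ⊆ Set.Icc 0 M) (hvol : volume s ≠ ⊤) :
    ∫ t in s, (cdf0 ν t - cdf0 μ t) ≤ wassDist M μ ν := by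
  have iν : IntegrableOn (cdf0 ν) s := cdf0_integrableOn s hvol
  have iμ : IntegrableOn (cdf0 μ) s := cdf0_integrableOn s hvol
  have iabs : IntegrableOn (fun t => |cdf0 μ t - cdf0 ν t|) s := (iμ.sub iν).abs
  have iabsM : IntegrableOn (fun t => |cdf0 μ t - cdf0 ν t|) (Set.Icc 0 M) :=
    ((cdf0_integrableOn _ vol_ne_top).sub (cdf0_integrableOn _ vol_ne_top)).abs
  calc ∫ t in s, (cdf0 ν t - cdf0 μ t)
      ≤ ∫ t in s, |cdf0 μ t - cdf0 ν t| := by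
        refine integral_mono (iν.sub iμ) iabs fun t => ?_
        rw [abs_sub_comm]; exact le_abs_self _
    _ ≤ wassDist M μ ν :=
        setIntegral_mono_set iabsM (ae_of_all _ fun t => abs_nonneg _)
          (HasSubset.Subset.eventuallyLE hsub)

lemma skiCost_diff_le [IsProbabilityMeasure μ] [IsProbabilityMeasure ν]
    (hμ : μ (Set.Icc 0 M) = 1) (hν : ν (Set.Icc 0 M) = 1) {x : ℝ} (hx : x ∈ Set.Icc 0 M) :
    skiCost b x μ ≤ skiCost b x ν + b * (cdf0 ν x - cdf0 μ x) + wassDist M μ ν := by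
  have hsub : Set.Icc 0 x ⊆ Set.Icc 0 M := Set.Icc_subset_Icc_right hx.2
  have key : (∫ t in Set.Icc 0 x, cdf0 ν t) - ∫ t in Set.Icc 0 x, cdf0 μ t ≤ wassDist M μ ν := by
    rw [← integral_sub (cdf0_integrableOn _ vol_ne_top) (cdf0_integrableOn _ vol_ne_top)]
    exact setint_sub_le_wass hsub vol_ne_top
  rw [skiCost_eq hμ hx, skiCost_eq hν hx]
  linarith

lemma skiCost_mono_le [IsProbabilityMeasure μ] (hμ : μ (Set.Icc 0 M) = 1)
    {x y : ℝ} (hx : 0 ≤ x) (hxy : x ≤ y) (hy : y ≤ M) :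
    skiCost b y μ ≤ skiCost b x μ + (y - x) - b * (cdf0 μ y - cdf0 μ x) := by
  have h1 : (∫ t in Set.Icc 0 x, cdf0 μ t) ≤ ∫ t in Set.Icc 0 y, cdf0 μ t :=
    setIntegral_mono_set (cdf0_integrableOn _ vol_ne_top)
      (ae_of_all _ fun t => cdf0_nonneg μ t)
      (HasSubset.Subset.eventuallyLE (Set.Icc_subset_Icc_right hxy))
  rw [skiCost_eq hμ ⟨le_trans hx hxy, hy⟩, skiCost_eq hμ ⟨hx, le_trans hxy hy⟩]
  linarith

lemma avg_int [IsProbabilityMeasure μ] [IsProbabilityMeasure ν]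
    {x y : ℝ} (hx : 0 ≤ x) (hxy : x ≤ y) (hy : y ≤ M) :
    (y - x) * (cdf0 ν x - cdf0 μ y) ≤ wassDist M μ ν := by
  have hsub : Set.Ioc x y ⊆ Set.Icc 0 M := fun t ht =>
    ⟨le_trans hx ht.1.le, le_trans ht.2 hy⟩
  have iν : IntegrableOn (cdf0 ν) (Set.Ioc x y) := cdf0_integrableOn _ vol_ne_top'
  have iμ : IntegrableOn (cdf0 μ) (Set.Ioc x y) := cdf0_integrableOn _ vol_ne_top'
  have h1 : (y - x) * cdf0 ν x ≤ ∫ t in Set.Ioc x y, cdf0 ν t := by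
    have := setIntegral_mono_on
      (integrableOn_const vol_ne_top') iν
      measurableSet_Ioc
      (fun t ht => cdf0_mono (le_of_lt ht.1) : ∀ t ∈ Set.Ioc x y, cdf0 ν x ≤ cdf0 ν t)
    rw [setIntegral_const] at this
    calc (y - x) * cdf0 ν x = (volume (Set.Ioc x y)).toReal • cdf0 ν x := by
          rw [Real.volume_Ioc, ENNReal.toReal_ofReal (by linarith)]; simp
      _ ≤ _ := this
  have h2 : (∫ t in Set.Ioc x y, cdf0 μ t) ≤ (y - x) * cdf0 μ y := by
    have := setIntegral_mono_on iμ
      (integrableOn_const vol_ne_top')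
      measurableSet_Ioc
      (fun t ht => cdf0_mono ht.2 : ∀ t ∈ Set.Ioc x y, cdf0 μ t ≤ cdf0 μ y)
    rw [setIntegral_const] at this
    calc (∫ t in Set.Ioc x y, cdf0 μ t) ≤ (volume (Set.Ioc x y)).toReal • cdf0 μ y := this
      _ = (y - x) * cdf0 μ y := by
          rw [Real.volume_Ioc, ENNReal.toReal_ofReal (by linarith)]; simp
  have h3 : (∫ t in Set.Ioc x y, cdf0 ν t) - ∫ t in Set.Ioc x y, cdf0 μ t ≤ wassDist M μ ν := by
    rw [← integral_sub iν iμ]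
    exact setint_sub_le_wass hsub vol_ne_top'
  nlinarith [h1, h2, h3]

lemma skiCost_nonneg [IsProbabilityMeasure μ] (hμ : μ (Set.Icc 0 M) = 1)
    (hb : 0 ≤ b) {x : ℝ} (hx : 0 ≤ x) : 0 ≤ skiCost b x μ := by
  refine integral_nonneg_of_ae ?_
  filter_upwards [ae_mem_Icc hμ] with ξ hξ
  by_cases h : ξ ≤ x
  · simpa [h] using hξ.1
  · simp [h]; linarith

lemma optSki_le [IsProbabilityMeasure μ] (hμ : μ (Set.Icc 0 M) = 1)
    (hb : 0 ≤ b) {x : ℝ} (hx : x ∈ Set.Icc 0 M) :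
    optSki b M μ ≤ skiCost b x μ := by
  refine ciInf_le ⟨0, ?_⟩ (⟨x, hx⟩ : Set.Icc (0:ℝ) M)
  rintro r ⟨⟨y, hy⟩, rfl⟩
  exact skiCost_nonneg hμ hb hy.1

lemma cdf0_right_tendsto [IsProbabilityMeasure μ] {x : ℝ} :
    Tendsto (fun n : ℕ => cdf0 μ (x + 1/(n+1))) atTop (nhds (cdf0 μ x)) := by
  have hinter : ⋂ n : ℕ, Set.Icc (0:ℝ) (x + 1/(n+1)) = Set.Icc 0 x := by
    ext t
    simp only [Set.mem_iInter, Set.mem_Icc]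
    constructor
    · intro h
      refine ⟨(h 0).1, ?_⟩
      by_contra hc
      push_neg at hc
      obtain ⟨n, hn⟩ := exists_nat_one_div_lt (sub_pos.2 hc)
      linarith [(h n).2]
    · intro h n
      have : (0:ℝ) < 1/(n+1) := by positivity
      exact ⟨h.1, by linarith [h.2]⟩
  have hset : Tendsto (fun n : ℕ => μ (Set.Icc 0 (x + 1/(n+1)))) atTop
      (nhds (μ (Set.Icc 0 x))) := by
    have h := tendsto_measure_iInter_atTop (μ := μ)
      (s := fun n : ℕ => Set.Icc (0:ℝ) (x + 1/(n+1)))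
      (fun n => measurableSet_Icc.nullMeasurableSet)
      (fun n m hnm => Set.Icc_subset_Icc_right (by
        have h1 : 1/((m:ℝ)+1) ≤ 1/((n:ℝ)+1) :=
          one_div_le_one_div_of_le (by positivity) (by exact_mod_cast Nat.succ_le_succ hnm)
        linarith))
      ⟨0, measure_ne_top _ _⟩
    rw [hinter] at h
    exact h
  exact (ENNReal.tendsto_toReal (measure_ne_top _ _)).comp hset

lemma avg_b [IsProbabilityMeasure μ] [IsProbabilityMeasure ν]
    (hμ : μ (Set.Icc 0 M) = 1) (hν : ν (Set.Icc 0 M) = 1)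
    (hb : 0 < b) (hε : 0 ≤ ε) (hd : wassDist M μ ν ≤ ε)
    {x : ℝ} (hx : x ∈ Set.Icc 0 M) :
    b * (cdf0 ν x - cdf0 μ (min (x + Real.sqrt (b * ε)) M)) ≤ Real.sqrt (b * ε) := by
  set δ := Real.sqrt (b * ε) with hδdef
  have hδ0 : 0 ≤ δ := Real.sqrt_nonneg _
  have hδsq : δ ^ 2 = b * ε := Real.sq_sqrt (by positivity)
  rcases le_or_gt M (x + δ) with hMle | hMlt
  · rw [min_eq_right hMle, cdf0_M hμ]
    have h1 : cdf0 ν x ≤ 1 := cdf0_le_one x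
    nlinarith
  · rw [min_eq_left hMlt.le]
    rcases eq_or_lt_of_le hδ0 with hδz | hδpos
    · have hε0 : ε = 0 := by nlinarith
      have hw0 : wassDist M μ ν = 0 :=
        le_antisymm (by rw [hε0] at hd; exact hd) wass_nonneg
      have hxM : x < M := by rw [← hδz] at hMlt; linarith
      have hkey : cdf0 ν x ≤ cdf0 μ x := by
        refine ge_of_tendsto (cdf0_right_tendsto (μ := μ) (x := x)) ?_
        obtain ⟨N, hN⟩ := exists_nat_one_div_lt (sub_pos.2 hxM)
        refine Filter.eventually_atTop.2 ⟨N, fun n hn => ?_⟩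
        have hη : (0:ℝ) < 1/(n+1) := by positivity
        have h1 : 1/((n:ℝ)+1) ≤ 1/((N:ℝ)+1) :=
          one_div_le_one_div_of_le (by positivity) (by exact_mod_cast Nat.succ_le_succ hn)
        have hle : x + 1/(n+1) ≤ M := by linarith
        have h2 := avg_int (μ := μ) (ν := ν) hx.1
          (le_add_of_nonneg_right hη.le) hle
        rw [hw0] at h2
        nlinarith
      have hxδ : x + δ = x := by rw [← hδz, add_zero]
      rw [hxδ]
      nlinarith
    · have h2 := avg_int (μ := μ) (ν := ν) hx.1 (le_add_of_nonneg_right hδ0) hMlt.le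
      have h3 : δ * (cdf0 ν x - cdf0 μ (x + δ)) ≤ ε := by
        have hxx : x + δ - x = δ := by ring
        rw [hxx] at h2
        linarith
      nlinarith [mul_le_mul_of_nonneg_left h3 hb.le]

end Auxiliary

/-- Ski rental under Wasserstein heterogeneity: (i) the SAA decision has regret at most
`2b + 2 d_W(μ,ν)`; (ii) the `√(bε)`-inflated SAA decision has regret at most
`4√(bε) + 2ε`. -/
theorem ski_rental_SAA_and_inflated_regret
    (M b ε : ℝ) (hM : 0 < M) (hb : 0 < b) (hε : 0 ≤ ε)
    (μ ν : Measure ℝ) [IsProbabilityMeasure μ] [IsProbabilityMeasure ν]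
    (hμ : μ (Set.Icc 0 M) = 1) (hν : ν (Set.Icc 0 M) = 1)
    (xν xμ : ℝ) (hmemν : xν ∈ Set.Icc (0:ℝ) M) (hmemμ : xμ ∈ Set.Icc (0:ℝ) M)
    (hxν : skiCost b xν ν = optSki b M ν) (hxμ : skiCost b xμ μ = optSki b M μ) :
    skiCost b xν μ - optSki b M μ ≤ 2 * b + 2 * wassDist M μ ν
    ∧
    (wassDist M μ ν ≤ ε →
      skiCost b (min (xν + Real.sqrt (b * ε)) M) μ - optSki b M μ ≤
        4 * Real.sqrt (b * ε) + 2 * ε) := by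
  have hsym : wassDist M ν μ = wassDist M μ ν := wass_symm.symm
  constructor
  · -- Part (i)
    have h1 : skiCost b xν μ ≤ skiCost b xν ν + b * (cdf0 ν xν - cdf0 μ xν) + wassDist M μ ν :=
      skiCost_diff_le hμ hν hmemν
    have h2 : skiCost b xμ ν ≤ skiCost b xμ μ + b * (cdf0 μ xμ - cdf0 ν xμ) + wassDist M ν μ :=
      skiCost_diff_le hν hμ hmemμ
    have h3 : optSki b M ν ≤ skiCost b xμ ν := optSki_le hν hb.le hmemμ
    have b1 : b * (cdf0 ν xν - cdf0 μ xν) ≤ b := by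
      nlinarith [cdf0_le_one (μ := ν) xν, cdf0_nonneg μ xν]
    have b2 : b * (cdf0 μ xμ - cdf0 ν xμ) ≤ b := by
      nlinarith [cdf0_le_one (μ := μ) xμ, cdf0_nonneg ν xμ]
    rw [hsym] at h2
    linarith [hxν ▸ h3, hxμ ▸ h2]
  · -- Part (ii)
    intro hd
    set δ := Real.sqrt (b * ε) with hδdef
    have hδ0 : 0 ≤ δ := Real.sqrt_nonneg _
    set p := min (xν + δ) M with hpdef
    set q := min (xμ + δ) M with hqdef
    have hp : p ∈ Set.Icc 0 M :=
      ⟨le_min (by linarith [hmemν.1]) hM.le, min_le_right _ _⟩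
    have hxνp : xν ≤ p := le_min (le_add_of_nonneg_right hδ0) hmemν.2
    have hpδ : p ≤ xν + δ := min_le_left _ _
    have hq : q ∈ Set.Icc 0 M :=
      ⟨le_min (by linarith [hmemμ.1]) hM.le, min_le_right _ _⟩
    have hxμq : xμ ≤ q := le_min (le_add_of_nonneg_right hδ0) hmemμ.2
    have hqδ : q ≤ xμ + δ := min_le_left _ _
    have A1 : skiCost b p μ ≤ skiCost b p ν + b * (cdf0 ν p - cdf0 μ p) + wassDist M μ ν :=
      skiCost_diff_le hμ hν hp
    have A2 : skiCost b p ν ≤ skiCost b xν ν + (p - xν) - b * (cdf0 ν p - cdf0 ν xν) :=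
      skiCost_mono_le hν hmemν.1 hxνp hp.2
    have A3 : b * (cdf0 ν xν - cdf0 μ p) ≤ δ := avg_b hμ hν hb hε hd hmemν
    have B0 : optSki b M ν ≤ skiCost b q ν := optSki_le hν hb.le hq
    have B1 : skiCost b q ν ≤ skiCost b q μ + b * (cdf0 μ q - cdf0 ν q) + wassDist M ν μ :=
      skiCost_diff_le hν hμ hq
    have B2 : skiCost b q μ ≤ skiCost b xμ μ + (q - xμ) - b * (cdf0 μ q - cdf0 μ xμ) :=
      skiCost_mono_le hμ hmemμ.1 hxμq hq.2
    have B3 : b * (cdf0 μ xμ - cdf0 ν q) ≤ δ :=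
      avg_b hν hμ hb hε (by rw [hsym]; exact hd) hmemμ
    rw [hsym] at B1
    linarith [hxν ▸ A2, hxμ ▸ B2, B0, A1, B1, A3, B3, hd, hpδ, hqδ]

end
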